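/- Let n ≥ 2 and let w ∈ S_n ⊆ Ŝ_n (so w is a bijection of ℤ with w(k+n) = w(k)+n mapping {1,…,n} to itself). Then the map (i,j) ↦ (i, j + (j−i+1)·n) is a bijection from the inversion set Inv(w) onto the set Inv_∞(γ⁻¹wγ) of singular inversions of γ⁻¹wγ. -/

import Mathlib

/-!
Statement 1: For `w` in the finite symmetric group `S_n ⊆ Ŝ_n`, the map
`(i,j) ↦ (i, j + (j−i+1)·n)` is a bijection from `Inv(w)` onto the set
`Inv_∞(γ⁻¹wγ)` of singular inversions of `γ⁻¹wγ`.

Here `Ŝ_n` is realized as the group of bijections `u : ℤ → ℤ` with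
`u(k+n) = u(k)+n`, `S_n` is the subgroup of those mapping `{1,…,n}` to itself,
and `γ(k) = k − n·((k−1) mod n)`, with inverse `γ⁻¹(m) = m + n·((m−1) mod n)`.
-/

/-- The element γ of the extended affine symmetric group: `γ(k) = k − n·((k−1) mod n)`. -/
def gam (n : ℕ) (k : ℤ) : ℤ := k - n * ((k - 1) % (n : ℤ))

/-- The inverse of γ: `γ⁻¹(m) = m + n·((m−1) mod n)`. -/
def gamInv (n : ℕ) (m : ℤ) : ℤ := m + n * ((m - 1) % (n : ℤ))

/-- The inversion set of a function `u : ℤ → ℤ`: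
pairs `(i,j)` with `1 ≤ i ≤ n`, `i < j` and `u(i) > u(j)`. -/
def InvSet (n : ℕ) (u : ℤ → ℤ) : Set (ℤ × ℤ) :=
  {p | 1 ≤ p.1 ∧ p.1 ≤ (n : ℤ) ∧ p.1 < p.2 ∧ u p.2 < u p.1}

/-- The singular inversions: inversions `(i,j)` with `j − i ≡ n mod (n+1)`. -/
def InvSetInf (n : ℕ) (u : ℤ → ℤ) : Set (ℤ × ℤ) :=
  {p ∈ InvSet n u | (p.2 - p.1) % ((n : ℤ) + 1) = (n : ℤ)}

lemma per_mul (n : ℕ) (w : Equiv.Perm ℤ) (hper : ∀ k : ℤ, w (k + n) = w k + n)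
    (t k : ℤ) : w (k + t * n) = w k + t * n := by
  induction t using Int.induction_on with
  | zero => simp
  | succ s ih =>
      have h := hper (k + (s : ℤ) * n)
      rw [ih] at h
      rw [show k + ((s : ℤ) + 1) * n = k + (s : ℤ) * n + n by ring, h]; ring
  | pred s ih =>
      have h := hper (k + (-(s : ℤ) - 1) * n)
      rw [show k + (-(s : ℤ) - 1) * n + (n : ℤ) = k + (-(s : ℤ)) * n by ring, ih] at h
      linarith

lemma key (n : ℕ) (hn : 1 ≤ n) (w : Equiv.Perm ℤ)
    (hper : ∀ k : ℤ, w (k + n) = w k + n)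
    (hfin : ∀ k : ℤ, 1 ≤ k → k ≤ n → 1 ≤ w k ∧ w k ≤ n) (m : ℤ) :
    gamInv n (w (gam n m)) = ((n : ℤ) + 1) * w m - n * m := by
  have hn0 : (0 : ℤ) < n := by exact_mod_cast hn
  set r := (m - 1) % (n : ℤ) with hrdef
  set t := (m - 1) / (n : ℤ) with htdef
  have hr0 : 0 ≤ r := Int.emod_nonneg _ (by omega)
  have hrn : r < n := Int.emod_lt_of_pos _ hn0
  have hm : (n : ℤ) * t + r = m - 1 := Int.mul_ediv_add_emod _ _
  have e : m - t * n = 1 + r := by linear_combination -hm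
  have hg : gam n m = m + (-r) * n := by unfold gam; ring
  have h1 : w (gam n m) = w m + (-r) * n := by rw [hg, per_mul n w hper]
  have hw0 := hfin (m - t * n) (by linarith) (by linarith)
  have hwm : w (m - t * n) = w m - t * n := by
    have h := per_mul n w hper (-t) m
    rw [show m + -t * (n : ℤ) = m - t * n by ring] at h
    linear_combination h
  rw [hwm] at hw0
  have hmod : (w m + (-r) * n - 1) % n = w m - t * n - 1 := by
    rw [show w m + (-r) * (n:ℤ) - 1 = (w m - t * n - 1) + (t - r) * n by ring,
      Int.add_mul_emod_self_right]
    exact Int.emod_eq_of_lt (by linarith [hw0.1]) (by linarith [hw0.2])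
  unfold gamInv
  rw [h1, hmod]
  linear_combination (-(n : ℤ)) * hm

theorem statement1 (n : ℕ) (hn : 2 ≤ n) (w : Equiv.Perm ℤ)
    (hper : ∀ k : ℤ, w (k + n) = w k + n)
    (hfin : ∀ k : ℤ, 1 ≤ k → k ≤ n → 1 ≤ w k ∧ w k ≤ n) :
    Set.BijOn (fun p : ℤ × ℤ => (p.1, p.2 + (p.2 - p.1 + 1) * n))
      (InvSet n ⇑w) (InvSetInf n (gamInv n ∘ ⇑w ∘ gam n)) := by
  have hn0 : (0 : ℤ) < n := by exact_mod_cast Nat.lt_of_lt_of_le Nat.zero_lt_two hn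
  have hkey : ∀ m : ℤ, (gamInv n ∘ ⇑w ∘ gam n) m = ((n : ℤ) + 1) * w m - n * m :=
    fun m => key n (by omega) w hper hfin m
  have hwmul := per_mul n w hper
  refine ⟨?_, ?_, ?_⟩
  · -- MapsTo
    rintro ⟨i, j⟩ ⟨hi1, hin, hij, hinv⟩
    dsimp only at hi1 hin hij hinv
    have hq : (0 : ℤ) < (j - i + 1) * n := mul_pos (by omega) hn0
    refine ⟨⟨hi1, hin, show i < j + (j - i + 1) * n by linarith, ?_⟩, ?_⟩
    · show (gamInv n ∘ ⇑w ∘ gam n) (j + (j - i + 1) * n) < (gamInv n ∘ ⇑w ∘ gam n) i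
      rw [hkey, hkey, hwmul (j - i + 1) j]
      have h2 : ((n : ℤ) + 1) * (w j + 1) ≤ ((n : ℤ) + 1) * w i :=
        mul_le_mul_of_nonneg_left (by omega) (by linarith)
      nlinarith [h2]
    · show ((j + (j - i + 1) * n) - i) % ((n : ℤ) + 1) = n
      rw [show (j + (j - i + 1) * n) - i = (n : ℤ) + ((n : ℤ) + 1) * (j - i) by ring,
        Int.add_mul_emod_self_left]
      exact Int.emod_eq_of_lt (by linarith) (by linarith)
  · -- InjOn
    rintro ⟨i1, j1⟩ _ ⟨i2, j2⟩ _ heq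
    simp only [Prod.mk.injEq] at heq ⊢
    obtain ⟨hii, hjj⟩ := heq
    subst hii
    refine ⟨rfl, ?_⟩
    have h0 : (j1 - j2) * ((n : ℤ) + 1) = 0 := by linear_combination hjj
    rcases mul_eq_zero.mp h0 with h | h
    · linarith
    · linarith
  · -- SurjOn
    rintro ⟨i, j'⟩ ⟨⟨hi1, hin, hij, hinv⟩, hmod⟩
    dsimp only at hi1 hin hij hinv hmod
    obtain ⟨t, hdm⟩ : ∃ t : ℤ, ((n : ℤ) + 1) * t + (n : ℤ) = j' - i := by
      refine ⟨(j' - i) / ((n : ℤ) + 1), ?_⟩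
      have h := Int.mul_ediv_add_emod (j' - i) ((n : ℤ) + 1)
      rw [hmod] at h
      exact h
    have hj'eq : j' = (i + t) + (t + 1) * n := by linear_combination -hdm
    have hwj' : w j' = w (i + t) + (t + 1) * n := by
      rw [hj'eq]; exact hwmul _ _
    have hinv' : ((n : ℤ) + 1) * w j' - n * j' < ((n : ℤ) + 1) * w i - n * i := by
      rw [← hkey, ← hkey]; exact hinv
    rw [hwj', hj'eq] at hinv'
    have hlt : ((n : ℤ) + 1) * w (i + t) < ((n : ℤ) + 1) * w i := by nlinarith [hinv']
    have hwlt : w (i + t) < w i := lt_of_mul_lt_mul_left hlt (by linarith)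
    have ht0 : 0 ≤ t := by
      by_contra h
      push_neg at h
      have h1 : t * ((n : ℤ) + 1) ≤ (-1) * ((n : ℤ) + 1) :=
        mul_le_mul_of_nonneg_right (by omega) (by linarith)
      linarith [hdm]
    have htne : t ≠ 0 := by
      rintro rfl
      simp at hwlt
    refine ⟨(i, i + t), ⟨hi1, hin, show i < i + t by omega, hwlt⟩, ?_⟩
    show (i, (i + t) + ((i + t) - i + 1) * (n : ℤ)) = (i, j')
    rw [Prod.mk.injEq]
    exact ⟨rfl, by linear_combination hdm⟩
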